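/- arXiv:1012.5251 — 2 statements merged into one kernel-verified Lean document; each statement's English description precedes it below -/
import Mathlib

section
/- Let n, m ≥ 1, N = n·m, and let A ∈ Matrix (Fin N) (Fin N) ℂ be block-upper-triangular. Then for every pair (i,j) lying strictly below the block diagonal (⌈i/m⌉ > ⌈j/m⌉), every matrix G ∈ Matrix (Fin N) (Fin N) ℂ, and all indices k, l, one has (sgn(i−k)−1)·A_{k,j}·G_{i,l} + (sgn(j−l)+1)·G_{k,j}·A_{i,l} + (sgn(j−k)+1)·A_{i,k}·G_{j,l} + (sgn(i−l)−1)·A_{l,j}·G_{k,i} = 0. (This is the consistency of the block-upper-triangular reduction with the mixed bracket {A_{i,j}, G^{(p)}_{k,l}} of the affine algebra.) -/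
open Matrix

noncomputable section

/-- The sign of the difference of two indices, as a complex number
(`sgn : ℤ → ℤ` with `sgn 0 = 0`). -/
def fsgn {N : ℕ} (a b : Fin N) : ℂ := ((((a : ℕ) : ℤ) - ((b : ℕ) : ℤ)).sign : ℤ)

/-- `A` is block-upper-triangular with respect to `m × m` blocks. -/
def IsBUT (n m : ℕ) (A : Matrix (Fin (n * m)) (Fin (n * m)) ℂ) : Prop :=
  ∀ i j : Fin (n * m), (j : ℕ) / m < (i : ℕ) / m → A i j = 0

/-- The mixed bracket `{A_{i,j}, G^{(p)}_{k,l}}` of the affine algebra between a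
zero-level entry of `A` and a level-`p` entry of `G`. -/
def mixedBr {N : ℕ} (A G : Matrix (Fin N) (Fin N) ℂ) (i j k l : Fin N) : ℂ :=
  (fsgn i k - 1) * A k j * G i l + (fsgn j l + 1) * G k j * A i l
    + (fsgn j k + 1) * A i k * G j l + (fsgn i l - 1) * A l j * G k i

lemma fsgn_of_lt {N : ℕ} {a b : Fin N} (h : (b : ℕ) < (a : ℕ)) : fsgn a b = 1 := by
  unfold fsgn
  rw [Int.sign_eq_one_iff_pos.2 (by omega)]
  norm_num

lemma fsgn_of_gt {N : ℕ} {a b : Fin N} (h : (a : ℕ) < (b : ℕ)) : fsgn a b = -1 := by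
  unfold fsgn
  rw [Int.sign_eq_neg_one_iff_neg.2 (by omega)]
  norm_num

/-- consistency of the block-upper-triangular reduction with the mixed
bracket `{A_{i,j}, G^{(p)}_{k,l}}` of the affine algebra: the bracket of any
constrained-to-zero entry of `A` with any entry of `G` vanishes. -/
theorem affine_reduction_but (n m : ℕ) (hn : 1 ≤ n) (hm : 1 ≤ m)
    (A : Matrix (Fin (n * m)) (Fin (n * m)) ℂ) (hA : IsBUT n m A)
    (i j : Fin (n * m)) (hij : (j : ℕ) / m < (i : ℕ) / m)
    (G : Matrix (Fin (n * m)) (Fin (n * m)) ℂ) (k l : Fin (n * m)) :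
    mixedBr A G i j k l = 0 := by
  unfold mixedBr
  have key : ∀ a b : Fin (n * m), (b : ℕ) / m < (a : ℕ) / m → (b : ℕ) < (a : ℕ) := by
    intro a b h
    by_contra hc
    exact absurd (Nat.div_le_div_right (le_of_not_gt hc)) (not_le.2 h)
  have t1 : (fsgn i k - 1) * A k j * G i l = 0 := by
    rcases lt_or_ge ((j : ℕ) / m) ((k : ℕ) / m) with h | h
    · rw [hA k j h]; ring
    · rw [fsgn_of_lt (key i k (lt_of_le_of_lt h hij))]; ring
  have t2 : (fsgn j l + 1) * G k j * A i l = 0 := by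
    rcases lt_or_ge ((l : ℕ) / m) ((i : ℕ) / m) with h | h
    · rw [hA i l h]; ring
    · rw [fsgn_of_gt (key l j (lt_of_lt_of_le hij h))]; ring
  have t3 : (fsgn j k + 1) * A i k * G j l = 0 := by
    rcases lt_or_ge ((k : ℕ) / m) ((i : ℕ) / m) with h | h
    · rw [hA i k h]; ring
    · rw [fsgn_of_gt (key k j (lt_of_lt_of_le hij h))]; ring
  have t4 : (fsgn i l - 1) * A l j * G k i = 0 := by
    rcases lt_or_ge ((j : ℕ) / m) ((l : ℕ) / m) with h | h
    · rw [hA l j h]; ring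
    · rw [fsgn_of_lt (key i l (lt_of_le_of_lt h hij))]; ring
  rw [t1, t2, t3, t4]; ring
end
end

section
/- Let n ≥ 2, m ≥ 1, N = n·m, and let A ∈ Matrix (Fin N) (Fin N) ℂ be block-upper-triangular with all diagonal m×m blocks invertible. With β_{J,J+1}(A) := B_{J,J+1}(A)·A·B_{J,J+1}(A)ᵀ as in the braid group action (B_{J,J+1}(A) is the identity except in block rows/columns J, J+1 where it equals [[A_{J,J+1}ᵀ·A_{J,J}^{−T}, −𝟙_m],[A_{J,J}·A_{J,J}^{−T}, 0]]), let Φ := β_{n−1,n} ∘ ⋯ ∘ β_{2,3} ∘ β_{1,2}. Then the n-fold composition Φ^n satisfies, for all block indices I ≤ J: (Φ^n(A))_{I,J} = (A_{I,I}·A_{I,I}^{−T})^{n−2} · A_{I,J} · (A_{J,J}⁻¹·A_{J,J}ᵀ)^{n−2}; in particular (Φ^n(A))_{I,I} = A_{I,I} for every I and every n. -/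
open Matrix

noncomputable section

/-- The `(K,L)` block (of size `m × m`) of an `nm × nm` matrix. -/
def blk {n m : ℕ} (A : Matrix (Fin (n * m)) (Fin (n * m)) ℂ) (K L : Fin n) :
    Matrix (Fin m) (Fin m) ℂ :=
  fun a b =>
    A ⟨K.val * m + a.val, by
        have ha := a.isLt
        have h2 : (K.val + 1) * m ≤ n * m := Nat.mul_le_mul_right m K.isLt
        have h3 : K.val * m + m = (K.val + 1) * m := by ring
        omega⟩
      ⟨L.val * m + b.val, by
        have hb := b.isLt
        have h2 : (L.val + 1) * m ≤ n * m := Nat.mul_le_mul_right m L.isLt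
        have h3 : L.val * m + m = (L.val + 1) * m := by ring
        omega⟩

/-- The block index of a global index. -/
def blkIdx {n m : ℕ} (hm : 0 < m) (i : Fin (n * m)) : Fin n :=
  ⟨(i : ℕ) / m, (Nat.div_lt_iff_lt_mul hm).mpr i.isLt⟩

/-- The position of a global index inside its block. -/
def inIdx {n m : ℕ} (hm : 0 < m) (i : Fin (n * m)) : Fin m :=
  ⟨(i : ℕ) % m, Nat.mod_lt _ hm⟩

/-- The braid-group matrix `B_{I,I+1}(A)`. -/
def braidB {n m : ℕ} (hm : 0 < m) (I I' : Fin n)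
    (A : Matrix (Fin (n * m)) (Fin (n * m)) ℂ) : Matrix (Fin (n * m)) (Fin (n * m)) ℂ :=
  fun i j =>
    (if blkIdx hm i = I ∧ blkIdx hm j = I then (blk A I I')ᵀ * ((blk A I I)ᵀ)⁻¹
      else if blkIdx hm i = I ∧ blkIdx hm j = I' then -1
      else if blkIdx hm i = I' ∧ blkIdx hm j = I then blk A I I * ((blk A I I)ᵀ)⁻¹
      else if blkIdx hm i = I' ∧ blkIdx hm j = I' then 0
      else if blkIdx hm i = blkIdx hm j then 1 else 0)
    (inIdx hm i) (inIdx hm j)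

/-- The braid-group action `β_{I,I+1}(A) = B_{I,I+1}(A)·A·B_{I,I+1}(A)ᵀ`. -/
def braidAct {n m : ℕ} (hm : 0 < m) (I I' : Fin n)
    (A : Matrix (Fin (n * m)) (Fin (n * m)) ℂ) : Matrix (Fin (n * m)) (Fin (n * m)) ℂ :=
  braidB hm I I' A * A * (braidB hm I I' A)ᵀ

/-- The composition `Φ = β_{n−1,n} ∘ ⋯ ∘ β_{2,3} ∘ β_{1,2}` (applying `β_{1,2}` first). -/
def phiMap (n m : ℕ) (hm : 0 < m) (A : Matrix (Fin (n * m)) (Fin (n * m)) ℂ) :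
    Matrix (Fin (n * m)) (Fin (n * m)) ℂ :=
  Fin.foldl (n - 1)
    (fun M J => braidAct hm
      ⟨J.val, by have := J.isLt; omega⟩ ⟨J.val + 1, by have := J.isLt; omega⟩ M) A

----------------------------------------------------------------
-- Infrastructure
----------------------------------------------------------------

namespace BraidAux

variable {n m : ℕ}

def mkIdx (K : Fin n) (a : Fin m) : Fin (n * m) :=
  ⟨K.val * m + a.val, by
    have ha := a.isLt
    have h2 : (K.val + 1) * m ≤ n * m := Nat.mul_le_mul_right m K.isLt
    have h3 : K.val * m + m = (K.val + 1) * m := by ring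
    omega⟩

lemma blk_apply (A : Matrix (Fin (n * m)) (Fin (n * m)) ℂ) (K L : Fin n) (a b : Fin m) :
    blk A K L a b = A (mkIdx K a) (mkIdx L b) := rfl

@[simp] lemma blkIdx_mkIdx (hm : 0 < m) (K : Fin n) (a : Fin m) :
    blkIdx hm (mkIdx K a) = K := by
  ext
  show (K.val * m + a.val) / m = K.val
  rw [mul_comm, Nat.mul_add_div hm, Nat.div_eq_of_lt a.isLt, add_zero]

@[simp] lemma inIdx_mkIdx (hm : 0 < m) (K : Fin n) (a : Fin m) :
    inIdx hm (mkIdx K a) = a := by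
  ext
  show (K.val * m + a.val) % m = a.val
  rw [mul_comm, Nat.mul_add_mod, Nat.mod_eq_of_lt a.isLt]

lemma mkIdx_blkIdx (hm : 0 < m) (i : Fin (n * m)) :
    mkIdx (blkIdx hm i) (inIdx hm i) = i := by
  ext
  show (i : ℕ) / m * m + (i : ℕ) % m = i
  rw [mul_comm]
  exact Nat.div_add_mod _ _

def pairEquiv (hm : 0 < m) : Fin n × Fin m ≃ Fin (n * m) where
  toFun p := mkIdx p.1 p.2
  invFun i := (blkIdx hm i, inIdx hm i)
  left_inv p := by simp [blkIdx_mkIdx hm, inIdx_mkIdx hm]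
  right_inv i := mkIdx_blkIdx hm i

lemma sum_blocks {α : Type*} [AddCommMonoid α] (hm : 0 < m) (f : Fin (n * m) → α) :
    ∑ i, f i = ∑ K : Fin n, ∑ a : Fin m, f (mkIdx K a) := by
  rw [← Equiv.sum_comp (pairEquiv hm) f, Fintype.sum_prod_type]
  rfl

lemma entry_eq_blk (hm : 0 < m) (A : Matrix (Fin (n * m)) (Fin (n * m)) ℂ)
    (i j : Fin (n * m)) :
    A i j = blk A (blkIdx hm i) (blkIdx hm j) (inIdx hm i) (inIdx hm j) := by
  rw [blk_apply, mkIdx_blkIdx, mkIdx_blkIdx]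

lemma blk_mul (hm : 0 < m) (X Y : Matrix (Fin (n * m)) (Fin (n * m)) ℂ) (K L : Fin n) :
    blk (X * Y) K L = ∑ P : Fin n, blk X K P * blk Y P L := by
  ext a b
  have h1 : (∑ P : Fin n, blk X K P * blk Y P L) a b
      = ∑ P : Fin n, (blk X K P * blk Y P L) a b := by
    simp [Matrix.sum_apply]
  rw [h1, blk_apply, Matrix.mul_apply,
    sum_blocks hm (fun t => X (mkIdx K a) t * Y t (mkIdx L b))]
  refine Finset.sum_congr rfl fun P _ => ?_
  rw [Matrix.mul_apply]
  rfl

lemma blk_transpose (A : Matrix (Fin (n * m)) (Fin (n * m)) ℂ) (K L : Fin n) :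
    blk Aᵀ K L = (blk A L K)ᵀ := rfl

lemma blk_braidB (hm : 0 < m) (I I' K L : Fin n)
    (A : Matrix (Fin (n * m)) (Fin (n * m)) ℂ) :
    blk (braidB hm I I' A) K L =
      if K = I ∧ L = I then (blk A I I')ᵀ * ((blk A I I)ᵀ)⁻¹
      else if K = I ∧ L = I' then -1
      else if K = I' ∧ L = I then blk A I I * ((blk A I I)ᵀ)⁻¹
      else if K = I' ∧ L = I' then 0
      else if K = L then 1 else 0 := by
  ext a b
  rw [blk_apply]
  unfold braidB
  rw [blkIdx_mkIdx, blkIdx_mkIdx, inIdx_mkIdx, inIdx_mkIdx]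

end BraidAux

namespace BraidAux

variable {n m : ℕ}

lemma blk_braidB_mulA (hm : 0 < m) (J J' : Fin n) (hne : J ≠ J')
    (A : Matrix (Fin (n * m)) (Fin (n * m)) ℂ) (K L : Fin n) :
    blk (braidB hm J J' A * A) K L =
      if K = J then (blk A J J')ᵀ * (((blk A J J)ᵀ)⁻¹ * blk A J L) - blk A J' L
      else if K = J' then blk A J J * (((blk A J J)ᵀ)⁻¹ * blk A J L)
      else blk A K L := by
  rw [blk_mul hm]
  by_cases hK : K = J
  · subst hK
    rw [if_pos rfl]
    rw [Finset.sum_eq_add_of_mem K J' (Finset.mem_univ _) (Finset.mem_univ _) hne ?_]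
    · simp [blk_braidB, hne, Ne.symm hne, Matrix.mul_assoc, sub_eq_add_neg]
    · intro c _ hc
      simp [blk_braidB, hne, Ne.symm hne, hc.1, hc.2, Ne.symm hc.1, Ne.symm hc.2]
  · rw [if_neg hK]
    by_cases hK' : K = J'
    · subst hK'
      rw [if_pos rfl]
      rw [Finset.sum_eq_single_of_mem J (Finset.mem_univ _) ?_]

      · simp [blk_braidB, hne, Ne.symm hne, Matrix.mul_assoc]
      · intro c _ hc
        simp [blk_braidB, hne, Ne.symm hne, hc, hK]
        intro h1 h2; exact absurd h2.symm h1

    · rw [if_neg hK']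
      rw [Finset.sum_eq_single_of_mem K (Finset.mem_univ _) ?_]
      · simp [blk_braidB, hK, hK']
      · intro c _ hc
        simp [blk_braidB, hK, hK', hc]
        intro h; exact absurd h.symm hc

end BraidAux

namespace BraidAux

variable {n m : ℕ}

lemma blk_mulBT (hm : 0 < m) (J J' : Fin n) (hne : J ≠ J')
    (A M : Matrix (Fin (n * m)) (Fin (n * m)) ℂ) (K L : Fin n) :
    blk (M * (braidB hm J J' A)ᵀ) K L =
      if L = J then blk M K J * ((blk A J J)⁻¹ * blk A J J') - blk M K J'
      else if L = J' then blk M K J * ((blk A J J)⁻¹ * (blk A J J)ᵀ)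
      else blk M K L := by
  have htinv : ((blk A J J)ᵀ)⁻¹ᵀ = (blk A J J)⁻¹ := by
    rw [← Matrix.transpose_nonsing_inv, Matrix.transpose_transpose]
  rw [blk_mul hm]
  by_cases hL : L = J
  · subst hL
    rw [if_pos rfl]
    rw [Finset.sum_eq_add_of_mem L J' (Finset.mem_univ _) (Finset.mem_univ _) hne ?_]
    · simp [blk_transpose, blk_braidB, hne, Ne.symm hne, Matrix.transpose_mul, htinv,
        Matrix.mul_assoc, sub_eq_add_neg]
    · intro c _ hc
      simp [blk_transpose, blk_braidB, hne, Ne.symm hne, hc.1, hc.2]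
      simp [Ne.symm hc.1]
  · rw [if_neg hL]
    by_cases hL' : L = J'
    · subst hL'
      rw [if_pos rfl]
      rw [Finset.sum_eq_single_of_mem J (Finset.mem_univ _) ?_]
      · simp [blk_transpose, blk_braidB, hne, Ne.symm hne, Matrix.transpose_mul, htinv,
          Matrix.mul_assoc]
      · intro c _ hc
        simp [blk_transpose, blk_braidB, hne, Ne.symm hne, hc]
        rcases eq_or_ne c L with h|h
        · simp [h]
        · simp [h, Ne.symm h]
    · rw [if_neg hL']
      rw [Finset.sum_eq_single_of_mem L (Finset.mem_univ _) ?_]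
      · simp [blk_transpose, blk_braidB, hL, hL']
      · intro c _ hc
        simp [blk_transpose, blk_braidB, hL, hL', hc]
        simp [Ne.symm hc]

end BraidAux

namespace BraidAux

variable {n m : ℕ}

lemma blk_braidAct (hm : 0 < m) (J J' : Fin n) (hne : J ≠ J')
    (A : Matrix (Fin (n * m)) (Fin (n * m)) ℂ)
    (h0 : blk A J' J = 0) (hu : IsUnit (blk A J J).det) (K L : Fin n) :
    blk (braidAct hm J J' A) K L =
      if K = J ∧ L = J then blk A J' J'
      else if K = J ∧ L = J' then (blk A J J')ᵀ
      else if K = J' ∧ L = J then 0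
      else if K = J' ∧ L = J' then blk A J J
      else if K = J then (blk A J J')ᵀ * (((blk A J J)ᵀ)⁻¹ * blk A J L) - blk A J' L
      else if K = J' then blk A J J * (((blk A J J)ᵀ)⁻¹ * blk A J L)
      else if L = J then blk A K J * ((blk A J J)⁻¹ * blk A J J') - blk A K J'
      else if L = J' then blk A K J * ((blk A J J)⁻¹ * (blk A J J)ᵀ)
      else blk A K L := by
  have hut : IsUnit ((blk A J J)ᵀ).det := by rwa [Matrix.det_transpose]
  have c1 : ∀ B : Matrix (Fin m) (Fin m) ℂ, (blk A J J)ᵀ * (((blk A J J)ᵀ)⁻¹ * B) = B :=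
    fun B => Matrix.mul_nonsing_inv_cancel_left _ _ hut
  have c2 : ∀ B : Matrix (Fin m) (Fin m) ℂ, ((blk A J J)ᵀ)⁻¹ * ((blk A J J)ᵀ * B) = B :=
    fun B => Matrix.nonsing_inv_mul_cancel_left _ _ hut
  have c3 : ∀ B : Matrix (Fin m) (Fin m) ℂ, blk A J J * ((blk A J J)⁻¹ * B) = B :=
    fun B => Matrix.mul_nonsing_inv_cancel_left _ _ hu
  have c4 : ∀ B : Matrix (Fin m) (Fin m) ℂ, (blk A J J)⁻¹ * (blk A J J * B) = B :=
    fun B => Matrix.nonsing_inv_mul_cancel_left _ _ hu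
  have hti : ((blk A J J)ᵀ)⁻¹ * (blk A J J)ᵀ = 1 := Matrix.nonsing_inv_mul _ hut
  show blk ((braidB hm J J' A * A) * (braidB hm J J' A)ᵀ) K L = _
  rw [blk_mulBT hm J J' hne A, blk_braidB_mulA hm J J' hne A K J,
      blk_braidB_mulA hm J J' hne A K J', blk_braidB_mulA hm J J' hne A K L]
  by_cases hK : K = J
  · have hK' : ¬ K = J' := by rw [hK]; exact hne
    by_cases hL : L = J
    · have hL' : ¬ L = J' := by rw [hL]; exact hne
      simp [hK, hK', hL, hL', hne, Ne.symm hne, h0, c1, c2, c3, c4, hti, Matrix.mul_assoc, sub_sub_cancel]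
    · by_cases hL' : L = J'
      · simp [hK, hK', hL, hL', hne, Ne.symm hne, h0, c1, c2, c3, c4, hti, Matrix.mul_assoc, sub_sub_cancel]
      · simp [hK, hK', hL, hL', hne, Ne.symm hne, h0, c1, c2, c3, c4, hti, Matrix.mul_assoc, sub_sub_cancel]
  · by_cases hK' : K = J'
    · by_cases hL : L = J
      · have hL' : ¬ L = J' := by rw [hL]; exact hne
        simp [hK, hK', hL, hL', hne, Ne.symm hne, h0, c1, c2, c3, c4, hti, Matrix.mul_assoc, sub_sub_cancel]
      · by_cases hL' : L = J'
        · simp [hK, hK', hL, hL', hne, Ne.symm hne, h0, c1, c2, c3, c4, hti, Matrix.mul_assoc, sub_sub_cancel]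
        · simp [hK, hK', hL, hL', hne, Ne.symm hne, h0, c1, c2, c3, c4, hti, Matrix.mul_assoc, sub_sub_cancel]
    · by_cases hL : L = J
      · have hL' : ¬ L = J' := by rw [hL]; exact hne
        simp [hK, hK', hL, hL', hne, Ne.symm hne, h0, c1, c2, c3, c4, hti, Matrix.mul_assoc, sub_sub_cancel]
      · by_cases hL' : L = J'
        · simp [hK, hK', hL, hL', hne, Ne.symm hne, h0, c1, c2, c3, c4, hti, Matrix.mul_assoc, sub_sub_cancel]
        · simp [hK, hK', hL, hL', hne, Ne.symm hne, h0, c1, c2, c3, c4, hti, Matrix.mul_assoc, sub_sub_cancel]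

end BraidAux

namespace BraidAux

variable {n m : ℕ}

def gStep (n m : ℕ) (hm : 0 < m) (j : ℕ) (M : Matrix (Fin (n * m)) (Fin (n * m)) ℂ) :
    Matrix (Fin (n * m)) (Fin (n * m)) ℂ :=
  if h : j + 1 < n then braidAct hm ⟨j, by omega⟩ ⟨j + 1, h⟩ M else M

def sweep (n m : ℕ) (hm : 0 < m) : ℕ → Matrix (Fin (n * m)) (Fin (n * m)) ℂ →
    Matrix (Fin (n * m)) (Fin (n * m)) ℂ
  | 0, A => A
  | k + 1, A => gStep n m hm k (sweep n m hm k A)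

lemma foldl_eq_sweep (hm : 0 < m) (k : ℕ) (A : Matrix (Fin (n * m)) (Fin (n * m)) ℂ) :
    Fin.foldl k (fun M (J : Fin k) => gStep n m hm J.val M) A = sweep n m hm k A := by
  induction k with
  | zero => rw [Fin.foldl_zero]; rfl
  | succ k ih =>
    rw [Fin.foldl_succ_last]
    simp only [Fin.val_last, Fin.coe_castSucc]
    rw [ih]
    rfl

lemma phiMap_eq_sweep (hm : 0 < m) (A : Matrix (Fin (n * m)) (Fin (n * m)) ℂ) :
    phiMap n m hm A = sweep n m hm (n - 1) A := by
  rw [← foldl_eq_sweep hm]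
  unfold phiMap
  congr 1
  funext M J
  have h : J.val + 1 < n := by have := J.isLt; omega
  simp [gStep, dif_pos h]

end BraidAux

namespace BraidAux

variable {n m : ℕ}

def fI (n : ℕ) (hn : 0 < n) (t : ℕ) : Fin n := ⟨t % n, Nat.mod_lt _ hn⟩

lemma fI_val {hn : 0 < n} {t : ℕ} (h : t < n) : (fI n hn t : ℕ) = t := Nat.mod_eq_of_lt h

/-- State of the sweep after `k` steps, described blockwise. -/
def Dmat (hn : 0 < n) (A : Matrix (Fin (n * m)) (Fin (n * m)) ℂ) (k : ℕ) (K L : Fin n) :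
    Matrix (Fin m) (Fin m) ℂ :=
  if (L : ℕ) < (K : ℕ) then 0
  else if (K : ℕ) < k then
    if (L : ℕ) < k then blk A (fI n hn ((K : ℕ) + 1)) (fI n hn ((L : ℕ) + 1))
    else if (L : ℕ) = k then
      (blk A (fI n hn 0) (fI n hn ((K : ℕ) + 1)))ᵀ *
        ((blk A (fI n hn 0) (fI n hn 0))⁻¹ * (blk A (fI n hn 0) (fI n hn 0))ᵀ) ^ (k - 1)
    else
      (blk A (fI n hn 0) (fI n hn ((K : ℕ) + 1)))ᵀ *
          (((blk A (fI n hn 0) (fI n hn 0))ᵀ)⁻¹ * blk A (fI n hn 0) L) -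
        blk A (fI n hn ((K : ℕ) + 1)) L
  else if (K : ℕ) = k then
    if (L : ℕ) = k then blk A (fI n hn 0) (fI n hn 0)
    else (blk A (fI n hn 0) (fI n hn 0) * ((blk A (fI n hn 0) (fI n hn 0))ᵀ)⁻¹) ^ k *
      blk A (fI n hn 0) L
  else blk A K L

section Deval

variable {hn : 0 < n} {A : Matrix (Fin (n * m)) (Fin (n * m)) ℂ} {k : ℕ} {K L : Fin n}

lemma D_lt (h : (L : ℕ) < K) : Dmat hn A k K L = 0 := by
  rw [Dmat, if_pos h]

lemma D_low (hK : (K : ℕ) < k) (hKL : ¬ (L : ℕ) < (K : ℕ)) (hL : (L : ℕ) < k) :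
    Dmat hn A k K L = blk A (fI n hn ((K : ℕ) + 1)) (fI n hn ((L : ℕ) + 1)) := by
  rw [Dmat, if_neg hKL, if_pos hK, if_pos hL]

lemma D_mid (hK : (K : ℕ) < k) (hL : (L : ℕ) = k) :
    Dmat hn A k K L =
      (blk A (fI n hn 0) (fI n hn ((K : ℕ) + 1)))ᵀ *
        ((blk A (fI n hn 0) (fI n hn 0))⁻¹ * (blk A (fI n hn 0) (fI n hn 0))ᵀ) ^ (k - 1) := by
  rw [Dmat, if_neg (by omega), if_pos hK, if_neg (by omega), if_pos hL]

lemma D_high (hK : (K : ℕ) < k) (hL : k < (L : ℕ)) :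
    Dmat hn A k K L =
      (blk A (fI n hn 0) (fI n hn ((K : ℕ) + 1)))ᵀ *
          (((blk A (fI n hn 0) (fI n hn 0))ᵀ)⁻¹ * blk A (fI n hn 0) L) -
        blk A (fI n hn ((K : ℕ) + 1)) L := by
  rw [Dmat, if_neg (by omega), if_pos hK, if_neg (by omega), if_neg (by omega)]

lemma D_pivdiag (hK : (K : ℕ) = k) (hL : (L : ℕ) = k) :
    Dmat hn A k K L = blk A (fI n hn 0) (fI n hn 0) := by
  rw [Dmat, if_neg (by omega), if_neg (by omega), if_pos hK, if_pos hL]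

lemma D_pivrow (hK : (K : ℕ) = k) (hL : k < (L : ℕ)) :
    Dmat hn A k K L =
      (blk A (fI n hn 0) (fI n hn 0) * ((blk A (fI n hn 0) (fI n hn 0))ᵀ)⁻¹) ^ k *
        blk A (fI n hn 0) L := by
  rw [Dmat, if_neg (by omega), if_neg (by omega), if_pos hK, if_neg (by omega)]

lemma D_rest (hA : ∀ K L : Fin n, (L : ℕ) < (K : ℕ) → blk A K L = 0)
    (hK : k < (K : ℕ)) : Dmat hn A k K L = blk A K L := by
  rcases lt_or_ge (L : ℕ) (K : ℕ) with h | h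
  · rw [D_lt h, hA K L h]
  · rw [Dmat, if_neg (by omega), if_neg (by omega), if_neg (by omega)]

end Deval

end BraidAux

namespace BraidAux

variable {m : ℕ}

section Keys

variable (P : Matrix (Fin m) (Fin m) ℂ)

lemma key_cT : (P * (Pᵀ)⁻¹)ᵀ = P⁻¹ * Pᵀ := by
  rw [Matrix.transpose_mul, Matrix.transpose_nonsing_inv, Matrix.transpose_transpose]

lemma key_cTpow (j : ℕ) : ((P * (Pᵀ)⁻¹) ^ j)ᵀ = (P⁻¹ * Pᵀ) ^ j := by
  rw [Matrix.transpose_pow, key_cT]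

lemma key_main (hu : IsUnit P.det) (j : ℕ) (X : Matrix (Fin m) (Fin m) ℂ) :
    (P⁻¹ * Pᵀ) ^ j * ((Pᵀ)⁻¹ * ((P * (Pᵀ)⁻¹) ^ j * X)) = (Pᵀ)⁻¹ * X := by
  have hut : IsUnit (Pᵀ).det := by rwa [Matrix.det_transpose]
  have c1 : ∀ B : Matrix (Fin m) (Fin m) ℂ, Pᵀ * ((Pᵀ)⁻¹ * B) = B :=
    fun B => Matrix.mul_nonsing_inv_cancel_left _ _ hut
  have c4 : ∀ B : Matrix (Fin m) (Fin m) ℂ, P⁻¹ * (P * B) = B :=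
    fun B => Matrix.nonsing_inv_mul_cancel_left _ _ hu
  induction j with
  | zero => simp
  | succ j ih =>
    have e1 : (P⁻¹ * Pᵀ) ^ (j + 1) = (P⁻¹ * Pᵀ) ^ j * (P⁻¹ * Pᵀ) := pow_succ _ _
    have e2 : (P * (Pᵀ)⁻¹) ^ (j + 1) = (P * (Pᵀ)⁻¹) * (P * (Pᵀ)⁻¹) ^ j := pow_succ' _ _
    rw [e1, e2]
    simp only [Matrix.mul_assoc, c1, c4]
    simpa only [Matrix.mul_assoc] using ih

lemma key2 (hu : IsUnit P.det) (j : ℕ) (X : Matrix (Fin m) (Fin m) ℂ) :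
    (P⁻¹ * Pᵀ) ^ j * (P⁻¹ * ((P * (Pᵀ)⁻¹) ^ (j + 1) * X)) = (Pᵀ)⁻¹ * X := by
  have c4 : ∀ B : Matrix (Fin m) (Fin m) ℂ, P⁻¹ * (P * B) = B :=
    fun B => Matrix.nonsing_inv_mul_cancel_left _ _ hu
  have e2 : (P * (Pᵀ)⁻¹) ^ (j + 1) = (P * (Pᵀ)⁻¹) * (P * (Pᵀ)⁻¹) ^ j := pow_succ' _ _
  rw [e2]
  simp only [Matrix.mul_assoc, c4]
  simpa only [Matrix.mul_assoc] using key_main P hu j X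

lemma key_diag (hu : IsUnit P.det) (j : ℕ) :
    (P * (Pᵀ)⁻¹) ^ j * (P * (P⁻¹ * Pᵀ) ^ j) = P := by
  have hut : IsUnit (Pᵀ).det := by rwa [Matrix.det_transpose]
  have c2 : ∀ B : Matrix (Fin m) (Fin m) ℂ, (Pᵀ)⁻¹ * (Pᵀ * B) = B :=
    fun B => Matrix.nonsing_inv_mul_cancel_left _ _ hut
  have c3 : ∀ B : Matrix (Fin m) (Fin m) ℂ, P * (P⁻¹ * B) = B :=
    fun B => Matrix.mul_nonsing_inv_cancel_left _ _ hu
  induction j with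
  | zero => simp
  | succ j ih =>
    have e1 : (P⁻¹ * Pᵀ) ^ (j + 1) = (P⁻¹ * Pᵀ) * (P⁻¹ * Pᵀ) ^ j := pow_succ' _ _
    have e2 : (P * (Pᵀ)⁻¹) ^ (j + 1) = (P * (Pᵀ)⁻¹) ^ j * (P * (Pᵀ)⁻¹) := pow_succ _ _
    rw [e1, e2]
    simp only [Matrix.mul_assoc, c2, c3]
    simpa only [Matrix.mul_assoc] using ih

end Keys

end BraidAux

namespace BraidAux

variable {n m : ℕ}

set_option maxHeartbeats 1000000 in
lemma sweep_blocks (hn0 : 0 < n) (hm : 0 < m) (A : Matrix (Fin (n * m)) (Fin (n * m)) ℂ)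
    (hA : ∀ K L : Fin n, (L : ℕ) < (K : ℕ) → blk A K L = 0)
    (hdiag : ∀ J : Fin n, IsUnit (blk A J J).det) :
    ∀ k, k ≤ n - 1 → ∀ K L : Fin n,
      blk (sweep n m hm k A) K L = Dmat hn0 A k K L := by
  intro k
  induction k with
  | zero =>
    intro _ K L
    show blk A K L = _
    by_cases h : (L : ℕ) < (K : ℕ)
    · rw [D_lt h, hA K L h]
    · by_cases hK : (K : ℕ) = 0
      · have hKf : K = fI n hn0 0 := Fin.ext (by rw [fI_val hn0]; exact hK)
        by_cases hL : (L : ℕ) = 0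
        · have hLf : L = fI n hn0 0 := Fin.ext (by rw [fI_val hn0]; exact hL)
          rw [D_pivdiag hK hL, hKf, hLf]
        · rw [D_pivrow hK (by omega), pow_zero, one_mul, hKf]
      · rw [D_rest hA (by omega)]
  | succ k ih =>
    intro hk1 K L
    have hkn : k + 1 < n := by omega
    have ihM := ih (by omega)
    set M := sweep n m hm k A with hM
    set Jk : Fin n := ⟨k, by omega⟩ with hJk
    set Jk1 : Fin n := ⟨k + 1, by omega⟩ with hJk1
    have vk : (Jk : ℕ) = k := rfl
    have vk1 : (Jk1 : ℕ) = k + 1 := rfl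
    have hne : Jk ≠ Jk1 := Fin.ne_of_val_ne (by omega)
    have h0 : blk M Jk1 Jk = 0 := by rw [ihM, D_lt (by omega)]
    have hMkk : blk M Jk Jk = blk A (fI n hn0 0) (fI n hn0 0) := by
      rw [ihM, D_pivdiag vk vk]
    have hu : IsUnit (blk M Jk Jk).det := by rw [hMkk]; exact hdiag _
    have hPu : IsUnit (blk A (fI n hn0 0) (fI n hn0 0)).det := hdiag _
    have hMkk1 : blk M Jk Jk1 =
        (blk A (fI n hn0 0) (fI n hn0 0) * ((blk A (fI n hn0 0) (fI n hn0 0))ᵀ)⁻¹) ^ k *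
          blk A (fI n hn0 0) Jk1 := by
      rw [ihM, D_pivrow vk (by omega)]
    have hMk1k1 : blk M Jk1 Jk1 = blk A Jk1 Jk1 := by rw [ihM, D_rest hA (by omega)]
    have hfk1 : fI n hn0 (k + 1) = Jk1 := Fin.ext (fI_val hkn)
    have hstep : sweep n m hm (k + 1) A = braidAct hm Jk Jk1 M := by
      show gStep n m hm k M = _
      rw [gStep, dif_pos hkn]
    rw [hstep, blk_braidAct hm Jk Jk1 hne M h0 hu K L]
    by_cases hKJ : K = Jk
    · by_cases hLJ : L = Jk
      · -- (a)
        subst hKJ; subst hLJ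
        rw [if_pos ⟨rfl, rfl⟩, hMk1k1, D_low (by omega) (by omega) (by omega), vk, hfk1]
      · by_cases hLJ' : L = Jk1
        · -- (b)
          subst hKJ; subst hLJ'
          rw [if_neg (fun h => hne h.2.symm), if_pos ⟨rfl, rfl⟩, hMkk1,
            Matrix.transpose_mul, key_cTpow, D_mid (by omega) (by omega), vk, hfk1,
            Nat.add_sub_cancel]
        · -- (c)
          subst hKJ
          have vLne : (L : ℕ) ≠ k := fun h => hLJ (Fin.ext (h.trans vk.symm))
          have vLne' : (L : ℕ) ≠ k + 1 := fun h => hLJ' (Fin.ext (h.trans vk1.symm))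
          rw [if_neg (fun h => hLJ h.2), if_neg (fun h => hLJ' h.2),
            if_neg (fun h => hne h.1), if_neg (fun h => hne h.1), if_pos rfl]
          by_cases hl : (L : ℕ) < k
          · rw [ihM Jk L, D_lt (by omega), ihM Jk1 L, D_rest hA (by omega),
              hA Jk1 L (by omega), D_lt (by omega)]
            simp
          · have hl2 : k + 1 < (L : ℕ) := by omega
            rw [ihM Jk L, D_pivrow vk (by omega), ihM Jk1 L, D_rest hA (by omega),
              hMkk1, hMkk, Matrix.transpose_mul, key_cTpow, Matrix.mul_assoc,
              key_main _ hPu, D_high (by omega) (by omega), vk, hfk1]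
    · by_cases hKJ' : K = Jk1
      · by_cases hLJ : L = Jk
        · -- (d)
          subst hKJ'; subst hLJ
          rw [if_neg (fun h => hne h.1.symm), if_neg (fun h => hne h.1.symm),
            if_pos ⟨rfl, rfl⟩, D_lt (by omega)]
        · by_cases hLJ' : L = Jk1
          · -- (e)
            subst hKJ'; subst hLJ'
            rw [if_neg (fun h => hne h.1.symm), if_neg (fun h => hne h.1.symm),
              if_neg (fun h => hne h.2.symm), if_pos ⟨rfl, rfl⟩, hMkk,
              D_pivdiag vk1 vk1]
          · -- (f)
            subst hKJ'
            have vLne : (L : ℕ) ≠ k := fun h => hLJ (Fin.ext (h.trans vk.symm))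
            have vLne' : (L : ℕ) ≠ k + 1 := fun h => hLJ' (Fin.ext (h.trans vk1.symm))
            rw [if_neg (fun h => hne h.1.symm), if_neg (fun h => hne h.1.symm),
              if_neg (fun h => hLJ h.2), if_neg (fun h => hLJ' h.2),
              if_neg (fun h => hne h.symm), if_pos rfl]
            by_cases hl : (L : ℕ) < k
            · rw [ihM Jk L, D_lt (by omega), D_lt (by omega)]
              simp
            · have hl2 : k + 1 < (L : ℕ) := by omega
              rw [ihM Jk L, D_pivrow vk (by omega), hMkk,
                D_pivrow vk1 (by omega), pow_succ', Matrix.mul_assoc, Matrix.mul_assoc]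
      · -- K ∉ {Jk, Jk1}
        have vKne : (K : ℕ) ≠ k := fun h => hKJ (Fin.ext (h.trans vk.symm))
        have vKne' : (K : ℕ) ≠ k + 1 := fun h => hKJ' (Fin.ext (h.trans vk1.symm))
        by_cases hLJ : L = Jk
        · -- (g)
          subst hLJ
          rw [if_neg (fun h => hKJ h.1), if_neg (fun h => hKJ h.1),
            if_neg (fun h => hKJ' h.1), if_neg (fun h => hKJ' h.1),
            if_neg hKJ, if_neg hKJ', if_pos rfl]
          by_cases hKv : (K : ℕ) < k
          · obtain ⟨j, rfl⟩ : ∃ j, k = j + 1 := ⟨k - 1, by omega⟩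
            rw [ihM K Jk, D_mid hKv vk, ihM K Jk1, D_high hKv (by omega),
              hMkk1, hMkk, Nat.add_sub_cancel, Matrix.mul_assoc, key2 _ hPu j,
              sub_sub_cancel, D_low (by omega) (by omega) (by omega), vk, hfk1]
          · have hKv2 : k + 1 < (K : ℕ) := by omega
            rw [ihM K Jk, D_rest hA (by omega), hA K Jk (by omega),
              ihM K Jk1, D_rest hA (by omega), hA K Jk1 (by omega), D_lt (by omega)]
            simp
        · by_cases hLJ' : L = Jk1
          · -- (h)
            subst hLJ'
            rw [if_neg (fun h => hKJ h.1), if_neg (fun h => hKJ h.1),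
              if_neg (fun h => hKJ' h.1), if_neg (fun h => hKJ' h.1),
              if_neg hKJ, if_neg hKJ', if_neg (fun h => hne h.symm), if_pos rfl]
            by_cases hKv : (K : ℕ) < k
            · obtain ⟨j, rfl⟩ : ∃ j, k = j + 1 := ⟨k - 1, by omega⟩
              rw [ihM K Jk, D_mid hKv vk, hMkk, Nat.add_sub_cancel,
                D_mid (by omega) (by omega), Nat.add_sub_cancel,
                Matrix.mul_assoc, ← pow_succ]
            · have hKv2 : k + 1 < (K : ℕ) := by omega
              rw [ihM K Jk, D_rest hA (by omega), hA K Jk (by omega), D_lt (by omega)]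
              simp
          · -- (i)
            have vLne : (L : ℕ) ≠ k := fun h => hLJ (Fin.ext (h.trans vk.symm))
            have vLne' : (L : ℕ) ≠ k + 1 := fun h => hLJ' (Fin.ext (h.trans vk1.symm))
            rw [if_neg (fun h => hKJ h.1), if_neg (fun h => hKJ h.1),
              if_neg (fun h => hKJ' h.1), if_neg (fun h => hKJ' h.1),
              if_neg hKJ, if_neg hKJ', if_neg hLJ, if_neg hLJ', ihM K L]
            rcases lt_or_ge (L : ℕ) (K : ℕ) with h | h
            · rw [D_lt h, D_lt h]
            · by_cases hKv : (K : ℕ) < k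
              · by_cases hl : (L : ℕ) < k
                · rw [D_low hKv (by omega) hl, D_low (by omega) (by omega) (by omega)]
                · have : k + 1 < (L : ℕ) := by omega
                  rw [D_high hKv (by omega), D_high (by omega) (by omega)]
              · have : k + 1 < (K : ℕ) := by omega
                rw [D_rest hA (by omega), D_rest hA (by omega)]

end BraidAux

namespace BraidAux

variable {n m : ℕ}

lemma key_qT (P : Matrix (Fin m) (Fin m) ℂ) : (P⁻¹ * Pᵀ)ᵀ = P * (Pᵀ)⁻¹ := by
  rw [Matrix.transpose_mul, Matrix.transpose_transpose, Matrix.transpose_nonsing_inv]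

lemma key_qTpow (P : Matrix (Fin m) (Fin m) ℂ) (j : ℕ) :
    ((P⁻¹ * Pᵀ) ^ j)ᵀ = (P * (Pᵀ)⁻¹) ^ j := by
  rw [Matrix.transpose_pow, key_qT]

/-- `q`-factor of a diagonal block. -/
def qq (A : Matrix (Fin (n * m)) (Fin (n * m)) ℂ) (X : Fin n) : Matrix (Fin m) (Fin m) ℂ :=
  (blk A X X)⁻¹ * (blk A X X)ᵀ

/-- `c`-factor of a diagonal block. -/
def cc (A : Matrix (Fin (n * m)) (Fin (n * m)) ℂ) (X : Fin n) : Matrix (Fin m) (Fin m) ℂ :=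
  blk A X X * ((blk A X X)ᵀ)⁻¹

lemma ccq_diag (A : Matrix (Fin (n * m)) (Fin (n * m)) ℂ) (X : Fin n)
    (hu : IsUnit (blk A X X).det) (j : ℕ) :
    cc A X ^ j * blk A X X * qq A X ^ j = blk A X X := by
  rw [Matrix.mul_assoc]
  exact key_diag _ hu j

/-- Blockwise description of `Φ^[k] A`. -/
def Emat (hn : 0 < n) (A : Matrix (Fin (n * m)) (Fin (n * m)) ℂ) (k : ℕ) (K L : Fin n) :
    Matrix (Fin m) (Fin m) ℂ :=
  if (L : ℕ) < (K : ℕ) then 0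
  else if (L : ℕ) + k < n then blk A (fI n hn ((K : ℕ) + k)) (fI n hn ((L : ℕ) + k))
  else if (K : ℕ) + k < n then
    (blk A (fI n hn ((L : ℕ) + k - n)) (fI n hn ((K : ℕ) + k)))ᵀ *
      qq A (fI n hn ((L : ℕ) + k - n)) ^ (n - 2)
  else
    cc A (fI n hn ((K : ℕ) + k - n)) ^ (n - 2) *
        blk A (fI n hn ((K : ℕ) + k - n)) (fI n hn ((L : ℕ) + k - n)) *
      qq A (fI n hn ((L : ℕ) + k - n)) ^ (n - 2)

section Eeval

variable {hn : 0 < n} {A : Matrix (Fin (n * m)) (Fin (n * m)) ℂ} {k : ℕ} {K L : Fin n}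

lemma E_lt (h : (L : ℕ) < (K : ℕ)) : Emat hn A k K L = 0 := by rw [Emat, if_pos h]

lemma E_phase0 (hKL : ¬ (L : ℕ) < (K : ℕ)) (h : (L : ℕ) + k < n) :
    Emat hn A k K L = blk A (fI n hn ((K : ℕ) + k)) (fI n hn ((L : ℕ) + k)) := by
  rw [Emat, if_neg hKL, if_pos h]

lemma E_phase1 (hKL : ¬ (L : ℕ) < (K : ℕ)) (h1 : ¬ (L : ℕ) + k < n) (h2 : (K : ℕ) + k < n) :
    Emat hn A k K L =
      (blk A (fI n hn ((L : ℕ) + k - n)) (fI n hn ((K : ℕ) + k)))ᵀ *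
        qq A (fI n hn ((L : ℕ) + k - n)) ^ (n - 2) := by
  rw [Emat, if_neg hKL, if_neg h1, if_pos h2]

lemma E_phase2 (hKL : ¬ (L : ℕ) < (K : ℕ)) (h1 : ¬ (L : ℕ) + k < n) (h2 : ¬ (K : ℕ) + k < n) :
    Emat hn A k K L =
      cc A (fI n hn ((K : ℕ) + k - n)) ^ (n - 2) *
          blk A (fI n hn ((K : ℕ) + k - n)) (fI n hn ((L : ℕ) + k - n)) *
        qq A (fI n hn ((L : ℕ) + k - n)) ^ (n - 2) := by
  rw [Emat, if_neg hKL, if_neg h1, if_neg h2]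

end Eeval

lemma phi_blocks (hn0 : 0 < n) (hm : 0 < m) (A : Matrix (Fin (n * m)) (Fin (n * m)) ℂ)
    (hA : ∀ K L : Fin n, (L : ℕ) < (K : ℕ) → blk A K L = 0)
    (hdiag : ∀ J : Fin n, IsUnit (blk A J J).det) (K L : Fin n) :
    blk (phiMap n m hm A) K L = Dmat hn0 A (n - 1) K L := by
  rw [phiMap_eq_sweep hm]
  exact sweep_blocks hn0 hm A hA hdiag (n - 1) le_rfl K L

lemma but_blk (hm : 0 < m) (A : Matrix (Fin (n * m)) (Fin (n * m)) ℂ) (hA : IsBUT n m A) :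
    ∀ K L : Fin n, (L : ℕ) < (K : ℕ) → blk A K L = 0 := by
  intro K L h
  ext a b
  rw [blk_apply]
  have h1 : ((mkIdx K a : Fin (n * m)) : ℕ) / m = (K : ℕ) :=
    congrArg Fin.val (blkIdx_mkIdx hm K a)
  have h2 : ((mkIdx L b : Fin (n * m)) : ℕ) / m = (L : ℕ) :=
    congrArg Fin.val (blkIdx_mkIdx hm L b)
  have := hA (mkIdx K a) (mkIdx L b) (by
    show ((mkIdx L b : ℕ)) / m < ((mkIdx K a : ℕ)) / m
    omega)
  simpa using this

end BraidAux

namespace BraidAux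

variable {n m : ℕ}

lemma qq_powT (A : Matrix (Fin (n * m)) (Fin (n * m)) ℂ) (X : Fin n) (j : ℕ) :
    (qq A X ^ j)ᵀ = cc A X ^ j := by
  simp only [qq, cc]
  exact key_qTpow _ j

set_option maxHeartbeats 1000000 in
lemma iter_blocks (hn : 2 ≤ n) (hn0 : 0 < n) (hm : 0 < m)
    (A : Matrix (Fin (n * m)) (Fin (n * m)) ℂ)
    (hA : ∀ K L : Fin n, (L : ℕ) < (K : ℕ) → blk A K L = 0)
    (hdiag : ∀ J : Fin n, IsUnit (blk A J J).det) :
    ∀ k, k ≤ n → ∀ K L : Fin n,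
      blk ((phiMap n m hm)^[k] A) K L = Emat hn0 A k K L := by
  intro k
  induction k with
  | zero =>
    intro _ K L
    simp only [Function.iterate_zero, id_eq]
    by_cases h : (L : ℕ) < (K : ℕ)
    · rw [E_lt h]; exact hA K L h
    · have hLn := L.isLt
      have hKn := K.isLt
      rw [E_phase0 h (by omega)]
      have e1 : fI n hn0 ((K : ℕ) + 0) = K := Fin.ext (by rw [fI_val (by omega)]; omega)
      have e2 : fI n hn0 ((L : ℕ) + 0) = L := Fin.ext (by rw [fI_val (by omega)]; omega)
      rw [e1, e2]
  | succ k ih =>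
    intro hk1 K L
    have hkn : k < n := by omega
    have ihE := ih (by omega)
    set N := (phiMap n m hm)^[k] A with hN
    have hAN : ∀ K L : Fin n, (L : ℕ) < (K : ℕ) → blk N K L = 0 := fun K L h => by
      rw [ihE K L, E_lt h]
    have v0 : (fI n hn0 0 : ℕ) = 0 := fI_val (by omega)
    have vfk : (fI n hn0 k : ℕ) = k := fI_val (by omega)
    have hNzz : blk N (fI n hn0 0) (fI n hn0 0) = blk A (fI n hn0 k) (fI n hn0 k) := by
      rw [ihE, E_phase0 (by omega) (by omega), show (fI n hn0 0 : ℕ) + k = k by omega]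
    have hdiagN : ∀ J : Fin n, IsUnit (blk N J J).det := by
      intro J
      have hJn := J.isLt
      rw [ihE J J]
      by_cases hJ : (J : ℕ) + k < n
      · rw [E_phase0 (by omega) hJ]; exact hdiag _
      · rw [E_phase2 (by omega) (by omega) hJ, ccq_diag A _ (hdiag _) (n - 2)]
        exact hdiag _
    have hvK := K.isLt
    have hvL := L.isLt
    rw [Function.iterate_succ_apply', phi_blocks hn0 hm N hAN hdiagN K L]
    by_cases hLK : (L : ℕ) < (K : ℕ)
    · rw [D_lt hLK, E_lt hLK]
    · by_cases hK1 : (K : ℕ) < n - 1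
      · have vK1 : (fI n hn0 ((K : ℕ) + 1) : ℕ) = (K : ℕ) + 1 := fI_val (by omega)
        by_cases hL1 : (L : ℕ) < n - 1
        · -- both move diagonally
          have vL1 : (fI n hn0 ((L : ℕ) + 1) : ℕ) = (L : ℕ) + 1 := fI_val (by omega)
          rw [D_low hK1 hLK hL1]
          by_cases hp0 : (L : ℕ) + (k + 1) < n
          · conv_rhs => rw [E_phase0 hLK hp0]
            rw [ihE, E_phase0 (by omega) (by omega), vK1, vL1,
              show (K : ℕ) + 1 + k = (K : ℕ) + (k + 1) by omega,
              show (L : ℕ) + 1 + k = (L : ℕ) + (k + 1) by omega]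
          · by_cases hp1 : (K : ℕ) + (k + 1) < n
            · conv_rhs => rw [E_phase1 hLK (by omega) hp1]
              rw [ihE, E_phase1 (by omega) (by omega) (by omega), vK1, vL1,
                show (L : ℕ) + 1 + k - n = (L : ℕ) + (k + 1) - n by omega,
                show (K : ℕ) + 1 + k = (K : ℕ) + (k + 1) by omega]
            · conv_rhs => rw [E_phase2 hLK (by omega) hp1]
              rw [ihE, E_phase2 (by omega) (by omega) (by omega), vK1, vL1,
                show (L : ℕ) + 1 + k - n = (L : ℕ) + (k + 1) - n by omega,
                show (K : ℕ) + 1 + k - n = (K : ℕ) + (k + 1) - n by omega]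
        · -- L = n - 1 : row K wraps into the last column
          have hLn : (L : ℕ) = n - 1 := by omega
          rw [D_mid hK1 hLn, hNzz, show n - 1 - 1 = n - 2 by omega]
          by_cases hp1 : (K : ℕ) + (k + 1) < n
          · conv_rhs => rw [E_phase1 hLK (by omega) hp1]
            rw [ihE, E_phase0 (by omega) (by omega), v0, vK1,
              show (0 : ℕ) + k = k by omega,
              show (K : ℕ) + 1 + k = (K : ℕ) + (k + 1) by omega,
              show (L : ℕ) + (k + 1) - n = k by omega]
            rfl
          · conv_rhs => rw [E_phase2 hLK (by omega) hp1]
            rw [ihE, E_phase1 (by omega) (by omega) (by omega), v0, vK1,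
              Matrix.transpose_mul, qq_powT, Matrix.transpose_transpose,
              show (K : ℕ) + 1 + k - n = (K : ℕ) + (k + 1) - n by omega,
              show (0 : ℕ) + k = k by omega,
              show (L : ℕ) + (k + 1) - n = k by omega]
            rfl
      · -- K = L = n - 1
        have hKn : (K : ℕ) = n - 1 := by omega
        have hLn : (L : ℕ) = n - 1 := by omega
        rw [D_pivdiag hKn hLn, hNzz]
        conv_rhs => rw [E_phase2 hLK (by omega) (by omega)]
        rw [show (K : ℕ) + (k + 1) - n = k by omega,
          show (L : ℕ) + (k + 1) - n = k by omega,
          ccq_diag A _ (hdiag _)]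

end BraidAux


open BraidAux

/-- the `n`-fold iterate of `Φ = β_{n−1,n} ∘ ⋯ ∘ β_{1,2}` acts on the
blocks of a block-upper-triangular matrix `A` by
`(Φⁿ(A))_{I,J} = (A_{I,I}·A_{I,I}^{−T})^{n−2}·A_{I,J}·(A_{J,J}⁻¹·A_{J,J}ᵀ)^{n−2}`;
in particular `(Φⁿ(A))_{I,I} = A_{I,I}` for every `I`. -/
theorem total_braid_action (n m : ℕ) (hn : 2 ≤ n) (hm : 1 ≤ m)
    (A : Matrix (Fin (n * m)) (Fin (n * m)) ℂ) (hA : IsBUT n m A)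
    (hdiag : ∀ J : Fin n, IsUnit (blk A J J).det) :
    (∀ I J : Fin n, I ≤ J →
        blk ((phiMap n m hm)^[n] A) I J
          = (blk A I I * ((blk A I I)ᵀ)⁻¹) ^ (n - 2) * blk A I J *
              ((blk A J J)⁻¹ * (blk A J J)ᵀ) ^ (n - 2)) ∧
    (∀ I : Fin n, blk ((phiMap n m hm)^[n] A) I I = blk A I I) := by
  have hn0 : 0 < n := by omega
  have hA' := but_blk hm A hA
  have key : ∀ I J : Fin n, I ≤ J →
      blk ((phiMap n m hm)^[n] A) I J
        = (blk A I I * ((blk A I I)ᵀ)⁻¹) ^ (n - 2) * blk A I J *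
            ((blk A J J)⁻¹ * (blk A J J)ᵀ) ^ (n - 2) := by
    intro I J hIJ
    have hIJ' : (I : ℕ) ≤ (J : ℕ) := hIJ
    have hI := I.isLt
    have hJ := J.isLt
    rw [iter_blocks hn hn0 hm A hA' hdiag n le_rfl I J,
      E_phase2 (by omega) (by omega) (by omega),
      show (I : ℕ) + n - n = (I : ℕ) by omega,
      show (J : ℕ) + n - n = (J : ℕ) by omega,
      show fI n hn0 (I : ℕ) = I from Fin.ext (fI_val hI),
      show fI n hn0 (J : ℕ) = J from Fin.ext (fI_val hJ)]
    rfl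
  refine ⟨key, fun I => ?_⟩
  rw [key I I le_rfl]
  exact ccq_diag A I (hdiag I) (n - 2)
end
end
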